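/- Let H be the v × b incidence matrix of an S(2,μ,v) with μ ≥ 2 and v > μ (rows indexed by points, columns by blocks). Then any set of columns of H that sums to zero over F_2 has size at least μ + 1; equivalently, the binary code with parity-check matrix H has minimum distance at least μ + 1. -/

import Mathlib

/-- For an `S(2,μ,v)` with `2 ≤ μ < v`, any nonempty set of
columns of its incidence matrix summing to zero over `F_2` (equivalently, a
nonempty subfamily of blocks covering every point an even number of times) has
size at least `μ + 1`; i.e. the code with parity-check matrix `H` has minimum
distance at least `μ + 1`. -/
theorem stmt6 (V : Type*) [Fintype V] [DecidableEq V] (B : Finset (Finset V))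
    (v μ : ℕ) (hv : Fintype.card V = v) (hμ : 2 ≤ μ) (hvμ : μ < v)
    (hsize : ∀ blk ∈ B, blk.card = μ)
    (hpair : ∀ x y : V, x ≠ y → (B.filter (fun blk => x ∈ blk ∧ y ∈ blk)).card = 1) :
    ∀ S ⊆ B, S.Nonempty →
      (∀ x : V, Even ((S.filter (fun blk => x ∈ blk)).card)) → μ + 1 ≤ S.card := by
  classical
  intro S hSB hSne hEven
  obtain ⟨b₀, hb₀⟩ := hSne
  have hb₀B : b₀ ∈ B := hSB hb₀
  have hb₀card : b₀.card = μ := hsize b₀ hb₀B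
  have hT : ∀ x ∈ b₀, ((S.filter (fun blk => x ∈ blk)).erase b₀).Nonempty := by
    intro x hx
    have h1 : b₀ ∈ S.filter (fun blk => x ∈ blk) := by
      simp [Finset.mem_filter, hb₀, hx]
    have h4 : 2 ≤ (S.filter (fun blk => x ∈ blk)).card := by
      have h2 : 1 ≤ (S.filter (fun blk => x ∈ blk)).card :=
        Finset.card_pos.mpr ⟨b₀, h1⟩
      rcases hEven x with ⟨k, hk⟩
      omega
    rw [← Finset.card_pos, Finset.card_erase_of_mem h1]
    omega
  set f : V → Finset V := fun x => if hx : x ∈ b₀ then (hT x hx).choose else ∅ with hf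
  have hspec : ∀ x (hx : x ∈ b₀),
      f x ≠ b₀ ∧ f x ∈ S ∧ x ∈ f x := by
    intro x hx
    have h := (hT x hx).choose_spec
    rw [Finset.mem_erase, Finset.mem_filter] at h
    simp only [hf, dif_pos hx]
    exact ⟨h.1, h.2.1, h.2.2⟩
  have hmaps : ∀ x ∈ b₀, f x ∈ S.erase b₀ := by
    intro x hx
    obtain ⟨h1, h2, _⟩ := hspec x hx
    exact Finset.mem_erase.mpr ⟨h1, h2⟩
  have hinj : Set.InjOn f b₀ := by
    intro x hx y hy hxy
    rw [Finset.mem_coe] at hx hy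
    by_contra hne
    obtain ⟨hx1, hx2, hx3⟩ := hspec x hx
    obtain ⟨hy1, hy2, hy3⟩ := hspec y hy
    have hcard := hpair x y hne
    have hb₀mem : b₀ ∈ B.filter (fun blk => x ∈ blk ∧ y ∈ blk) := by
      simp [Finset.mem_filter, hb₀B, hx, hy]
    have hfmem : f x ∈ B.filter (fun blk => x ∈ blk ∧ y ∈ blk) := by
      refine Finset.mem_filter.mpr ⟨hSB hx2, hx3, ?_⟩
      rw [hxy]; exact hy3
    have : ({b₀, f x} : Finset (Finset V)) ⊆ B.filter (fun blk => x ∈ blk ∧ y ∈ blk) := by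
      intro z hz
      rcases Finset.mem_insert.mp hz with h | h
      · exact h ▸ hb₀mem
      · exact (Finset.mem_singleton.mp h) ▸ hfmem
    have h2 : ({b₀, f x} : Finset (Finset V)).card = 2 := by
      rw [Finset.card_insert_of_notMem (by simp [Ne.symm hx1]), Finset.card_singleton]
    have := Finset.card_le_card this
    omega
  have hle : b₀.card ≤ (S.erase b₀).card :=
    Finset.card_le_card_of_injOn f hmaps hinj
  have : (S.erase b₀).card = S.card - 1 := Finset.card_erase_of_mem hb₀
  have h1 : 1 ≤ S.card := Finset.card_pos.mpr ⟨b₀, hb₀⟩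
  omega
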